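/- (Square root with nonnegative spectrum of AB + cI.) Let n be a finite index type, let A be an n×n real positive definite matrix, B an n×n real positive semidefinite matrix, and c ≥ 0. Let A^{1/2} denote the positive semidefinite square root of A and let K := (A^{1/2}·B·A^{1/2} + c·I)^{1/2} denote the positive semidefinite square root of A^{1/2}·B·A^{1/2} + c·I (which is positive semidefinite). Define M := A^{1/2}·K·(A^{1/2})⁻¹. Then (i) M·M = A·B + c·I, and (ii) the real spectrum of M is contained in [0, ∞). -/

import Mathlib

open Matrix

namespace Matrix.PosSemidef

open scoped ComplexOrder

/-- The positive semidefinite square root of a positive semidefinite matrix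
(the definition removed from Mathlib, restored with its old value). -/
noncomputable def sqrt {n : Type*} [Fintype n] [DecidableEq n] {𝕜 : Type*} [RCLike 𝕜]
    {A : Matrix n n 𝕜} (hA : A.PosSemidef) : Matrix n n 𝕜 :=
  hA.1.eigenvectorUnitary.1 * diagonal ((↑) ∘ (√·) ∘ hA.1.eigenvalues) *
    (star hA.1.eigenvectorUnitary : Matrix n n 𝕜)

theorem posSemidef_sqrt {n : Type*} [Fintype n] [DecidableEq n] {𝕜 : Type*} [RCLike 𝕜]
    {A : Matrix n n 𝕜} (hA : A.PosSemidef) : hA.sqrt.PosSemidef := by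
  unfold sqrt
  have hd : (diagonal ((↑) ∘ (√·) ∘ hA.1.eigenvalues) : Matrix n n 𝕜).PosSemidef :=
    posSemidef_diagonal_iff.mpr fun i => by
      simp only [Function.comp_apply]
      exact RCLike.ofReal_nonneg.mpr (Real.sqrt_nonneg _)
  have := hd.mul_mul_conjTranspose_same (hA.1.eigenvectorUnitary : Matrix n n 𝕜)
  simpa [star_eq_conjTranspose] using this

theorem sqrt_mul_self {n : Type*} [Fintype n] [DecidableEq n] {𝕜 : Type*} [RCLike 𝕜]
    {A : Matrix n n 𝕜} (hA : A.PosSemidef) : hA.sqrt * hA.sqrt = A := by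
  unfold sqrt
  set U := hA.1.eigenvectorUnitary
  have hU : (star U : Matrix n n 𝕜) * U = 1 := by simp
  conv_rhs => rw [hA.1.spectral_theorem, Unitary.conjStarAlgAut_apply]
  calc (U : Matrix n n 𝕜) * diagonal ((↑) ∘ (√·) ∘ hA.1.eigenvalues) * (star U : Matrix n n 𝕜) *
        ((U : Matrix n n 𝕜) * diagonal ((↑) ∘ (√·) ∘ hA.1.eigenvalues) * (star U : Matrix n n 𝕜))
      = (U : Matrix n n 𝕜) * (diagonal ((↑) ∘ (√·) ∘ hA.1.eigenvalues) *
        ((star U : Matrix n n 𝕜) * (U : Matrix n n 𝕜)) * diagonal ((↑) ∘ (√·) ∘ hA.1.eigenvalues)) *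
        (star U : Matrix n n 𝕜) := by simp only [Matrix.mul_assoc]
    _ = _ := by
      rw [hU, Matrix.mul_one, diagonal_mul_diagonal]
      congr 3
      funext i
      simp only [Function.comp_apply]
      rw [← RCLike.ofReal_mul, Real.mul_self_sqrt (hA.eigenvalues_nonneg i)]

end Matrix.PosSemidef

/-- Square root with nonnegative spectrum of `A·B + c·I`:
`M := A^{1/2}·(A^{1/2}·B·A^{1/2} + c·I)^{1/2}·(A^{1/2})⁻¹` squares to `A·B + c·I`
and has real spectrum contained in `[0, ∞)`. -/
theorem stmt15 {n : Type*} [Fintype n] [DecidableEq n]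
    (A B : Matrix n n ℝ) (c : ℝ) (hA : A.PosDef) (hB : B.PosSemidef) (hc : 0 ≤ c) :
    ∃ hS : (hA.posSemidef.sqrt * B * hA.posSemidef.sqrt + c • (1 : Matrix n n ℝ)).PosSemidef,
      (hA.posSemidef.sqrt * hS.sqrt * hA.posSemidef.sqrt⁻¹) *
          (hA.posSemidef.sqrt * hS.sqrt * hA.posSemidef.sqrt⁻¹) = A * B + c • 1 ∧
      spectrum ℝ (hA.posSemidef.sqrt * hS.sqrt * hA.posSemidef.sqrt⁻¹) ⊆ Set.Ici 0 := by
  set R := hA.posSemidef.sqrt with hRdef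
  have hRps : R.PosSemidef := hA.posSemidef.posSemidef_sqrt
  have hRR : R * R = A := hA.posSemidef.sqrt_mul_self
  have h1 : (c • (1 : Matrix n n ℝ)).PosSemidef := by
    rw [smul_one_eq_diagonal]
    exact posSemidef_diagonal_iff.mpr fun _ => hc
  have hS : (R * B * R + c • (1 : Matrix n n ℝ)).PosSemidef := by
    refine PosSemidef.add ?_ h1
    have := hB.mul_mul_conjTranspose_same R
    rwa [hRps.isHermitian.eq] at this
  set K := hS.sqrt with hKdef
  have hdet : IsUnit R.det := by
    rw [isUnit_iff_ne_zero]
    intro h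
    have : A.det = 0 := by rw [← hRR, det_mul, h, mul_zero]
    exact (ne_of_gt hA.det_pos) this
  have hKK : K * K = R * B * R + c • 1 := hS.sqrt_mul_self
  have hRinv : R⁻¹ * R = 1 := nonsing_inv_mul R hdet
  have hRinv' : R * R⁻¹ = 1 := mul_nonsing_inv R hdet
  refine ⟨hS, ?_, ?_⟩
  · calc (R * K * R⁻¹) * (R * K * R⁻¹)
        = R * (K * (R⁻¹ * R * (K * R⁻¹))) := by simp only [Matrix.mul_assoc]
      _ = R * (K * K) * R⁻¹ := by rw [hRinv, Matrix.one_mul]; simp only [Matrix.mul_assoc]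
      _ = R * (R * B * R) * R⁻¹ + R * (c • (1 : Matrix n n ℝ)) * R⁻¹ := by
          rw [hKK, Matrix.mul_add, Matrix.add_mul]
      _ = A * B + c • 1 := by
          rw [Matrix.mul_smul, Matrix.smul_mul, Matrix.mul_one, hRinv']
          congr 1
          calc R * (R * B * R) * R⁻¹ = R * R * B * (R * R⁻¹) := by
                simp only [Matrix.mul_assoc]
            _ = A * B := by rw [hRR, hRinv', Matrix.mul_one]
  · have hRu : IsUnit R := (isUnit_iff_isUnit_det R).mpr hdet
    have hinv : R⁻¹ = ↑(hRu.unit)⁻¹ := by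
      rw [Matrix.coe_units_inv, hRu.unit_spec]
    have heq : spectrum ℝ (R * K * R⁻¹) = spectrum ℝ K := by
      rw [hinv]
      nth_rewrite 1 [← hRu.unit_spec]
      exact spectrum.units_conjugate
    rw [heq, hS.posSemidef_sqrt.isHermitian.spectrum_real_eq_range_eigenvalues]
    rintro x ⟨i, rfl⟩
    exact hS.posSemidef_sqrt.eigenvalues_nonneg i
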